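/- Limit of the weight coefficients: for distinct positive reals λ_k ≠ λ_j, the quantity f(α) := (α−1)·(λ_k^{1/α} − λ_j^{1/α})/(λ_j^{(1−α)/α} − λ_k^{(1−α)/α}) converges to max(λ_k, λ_j) as α → 0⁺, and converges to (λ_k − λ_j)/(log λ_k − log λ j) as α → 1. -/

import Mathlib

open Filter Real

private lemma div_div_div_same {a b c : ℝ} (hc : c ≠ 0) : (a / c) / (b / c) = a / b := by
  rw [div_div_eq_mul_div, div_mul_cancel₀ _ hc]

/-- Limit as `α → 0⁺`, in the case `lj < lk`. -/
private lemma lim_zero (lk lj : ℝ) (hk : 0 < lk) (hj : 0 < lj) (h : lj < lk) :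
    Tendsto (fun α : ℝ =>
        (α - 1) * (lk ^ (1/α) - lj ^ (1/α)) / (lj ^ ((1 - α)/α) - lk ^ ((1 - α)/α)))
      (nhdsWithin 0 (Set.Ioi 0)) (nhds lk) := by
  have hrk : ∀ α : ℝ, (0:ℝ) < lk ^ (1/α) := fun α => Real.rpow_pos_of_pos hk _
  -- r α := (lj/lk)^(1/α) → 0
  have hr : Tendsto (fun α : ℝ => (lj/lk) ^ (1/α)) (nhdsWithin 0 (Set.Ioi 0)) (nhds 0) := by
    have hlog : Real.log (lj/lk) < 0 :=
      Real.log_neg (div_pos hj hk) ((div_lt_one hk).2 h)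
    have h1 : Tendsto (fun α : ℝ => 1/α) (nhdsWithin 0 (Set.Ioi 0)) atTop := by
      simpa using tendsto_inv_nhdsGT_zero
    have h2 : Tendsto (fun α : ℝ => (1/α) * Real.log (lj/lk))
        (nhdsWithin 0 (Set.Ioi 0)) atBot := h1.atTop_mul_const_of_neg hlog
    have h3 := Real.tendsto_exp_atBot.comp h2
    refine h3.congr fun α => ?_
    rw [Function.comp_apply, Real.rpow_def_of_pos (div_pos hj hk), mul_comm]
  -- rewritten form
  have key : Tendsto (fun α : ℝ =>
      (α - 1) * (1 - (lj/lk) ^ (1/α)) / ((lj/lk) ^ (1/α) / lj - 1/lk))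
      (nhdsWithin 0 (Set.Ioi 0)) (nhds lk) := by
    have hnum : Tendsto (fun α : ℝ => (α - 1) * (1 - (lj/lk) ^ (1/α)))
        (nhdsWithin 0 (Set.Ioi 0)) (nhds (-1)) := by
      have ha : Tendsto (fun α : ℝ => α - 1) (nhdsWithin 0 (Set.Ioi 0)) (nhds (-1)) := by
        have hc : Continuous fun α : ℝ => α - 1 := by continuity
        simpa using (hc.tendsto 0).mono_left nhdsWithin_le_nhds
      have hb : Tendsto (fun α : ℝ => 1 - (lj/lk) ^ (1/α))
          (nhdsWithin 0 (Set.Ioi 0)) (nhds 1) := by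
        simpa using (tendsto_const_nhds.sub hr)
      simpa using ha.mul hb
    have hden : Tendsto (fun α : ℝ => (lj/lk) ^ (1/α) / lj - 1/lk)
        (nhdsWithin 0 (Set.Ioi 0)) (nhds (-(1/lk))) := by
      have := (hr.div_const lj).sub (tendsto_const_nhds (x := (1:ℝ)/lk))
      simpa using this
    have hne : -(1/lk) ≠ 0 := neg_ne_zero.2 (by positivity)
    have := hnum.div hden hne
    simp only [Pi.div_def] at this
    convert this using 2
    all_goals field_simp [Pi.div_apply]
  refine key.congr' ?_
  filter_upwards [self_mem_nhdsWithin] with α (hα : 0 < α)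
  have hαne : α ≠ 0 := ne_of_gt hα
  have hx : lk ^ (1/α) ≠ 0 := ne_of_gt (hrk α)
  have e1 : ∀ l : ℝ, 0 < l → l ^ ((1 - α)/α) = l ^ (1/α) / l := by
    intro l hl
    rw [show (1 - α)/α = 1/α - 1 by field_simp, Real.rpow_sub hl, Real.rpow_one]
  have e2 : (lj/lk) ^ (1/α) = lj ^ (1/α) / lk ^ (1/α) :=
    Real.div_rpow hj.le hk.le _
  rw [e1 lj hj, e1 lk hk, e2]
  rw [show lj ^ (1/α) / lk ^ (1/α) / lj - 1/lk
      = (lj ^ (1/α) / lj - lk ^ (1/α) / lk) / lk ^ (1/α) by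
    field_simp]
  rw [show (α - 1) * (1 - lj ^ (1/α) / lk ^ (1/α))
      = (α - 1) * (lk ^ (1/α) - lj ^ (1/α)) / lk ^ (1/α) by
    field_simp]
  exact div_div_div_same hx

theorem weight_coefficient_limits (lk lj : ℝ) (hk : 0 < lk) (hj : 0 < lj) (hne : lk ≠ lj) :
    Tendsto (fun α : ℝ =>
        (α - 1) * (lk ^ (1/α) - lj ^ (1/α)) / (lj ^ ((1 - α)/α) - lk ^ ((1 - α)/α)))
      (nhdsWithin 0 (Set.Ioi 0)) (nhds (max lk lj)) ∧
    Tendsto (fun α : ℝ =>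
        (α - 1) * (lk ^ (1/α) - lj ^ (1/α)) / (lj ^ ((1 - α)/α) - lk ^ ((1 - α)/α)))
      (nhdsWithin 1 {(1:ℝ)}ᶜ) (nhds ((lk - lj) / (Real.log lk - Real.log lj))) := by
  have hlogne : Real.log lj - Real.log lk ≠ 0 := by
    refine sub_ne_zero.2 fun h => hne ?_
    rw [← Real.exp_log hk, ← Real.exp_log hj, h]
  constructor
  · rcases lt_or_gt_of_ne hne with h | h
    · -- lk < lj, max = lj
      rw [max_eq_right h.le]
      have := lim_zero lj lk hj hk h
      refine this.congr fun α => ?_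
      rw [show (α - 1) * (lj ^ (1/α) - lk ^ (1/α)) = -((α-1) * (lk ^ (1/α) - lj ^ (1/α))) by ring,
        show lk ^ ((1-α)/α) - lj ^ ((1-α)/α) = -(lj ^ ((1-α)/α) - lk ^ ((1-α)/α)) by ring,
        neg_div_neg_eq]
    · rw [max_eq_left h.le]
      exact lim_zero lk lj hk hj h
  · -- α → 1
    -- slope limit
    have hslope : Tendsto (fun β : ℝ => (lj ^ β - lk ^ β) / β)
        (nhdsWithin 0 {(0:ℝ)}ᶜ) (nhds (Real.log lj - Real.log lk)) := by
      have hd : HasDerivAt (fun β : ℝ => lj ^ β - lk ^ β)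
          (Real.log lj - Real.log lk) 0 := by
        have h1 := (Real.hasStrictDerivAt_const_rpow hj 0).hasDerivAt
        have h2 := (Real.hasStrictDerivAt_const_rpow hk 0).hasDerivAt
        have := h1.sub h2
        simp at this; exact this
      have := hasDerivAt_iff_tendsto_slope.1 hd
      refine this.congr fun β => ?_
      simp only [slope_def_field, Real.rpow_zero, sub_self, sub_zero]
    -- β(α) = (1-α)/α tends to 0 within ≠ 0
    have hbeta : Tendsto (fun α : ℝ => (1 - α)/α)
        (nhdsWithin 1 {(1:ℝ)}ᶜ) (nhdsWithin 0 {(0:ℝ)}ᶜ) := by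
      rw [tendsto_nhdsWithin_iff]
      constructor
      · have : Tendsto (fun α : ℝ => (1 - α)/α) (nhds 1) (nhds ((1-1)/1)) :=
          ((continuous_const.sub continuous_id).tendsto 1).div
            (continuous_id.tendsto 1) one_ne_zero
        simpa using this.mono_left nhdsWithin_le_nhds
      · have hpos : ∀ᶠ α : ℝ in nhdsWithin 1 {(1:ℝ)}ᶜ, 0 < α :=
          eventually_nhdsWithin_of_eventually_nhds (eventually_gt_nhds one_pos)
        filter_upwards [self_mem_nhdsWithin, hpos] with α hα1 hα0
        have h1 : α ≠ 1 := hα1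
        have h2 : (1:ℝ) - α ≠ 0 := fun h => h1 (by linarith [sub_eq_zero.1 h])
        simpa using div_ne_zero h2 (ne_of_gt hα0)
    -- first factor
    have hX : Tendsto (fun α : ℝ => lk ^ (1/α) - lj ^ (1/α))
        (nhdsWithin 1 {(1:ℝ)}ᶜ) (nhds (lk - lj)) := by
      have hinv : Tendsto (fun α : ℝ => 1/α) (nhds 1) (nhds 1) := by
        have h0 : ContinuousAt (fun α : ℝ => 1/α) 1 :=
          ContinuousAt.div continuousAt_const continuousAt_id one_ne_zero
        simpa using h0.tendsto
      have hl : ∀ l : ℝ, 0 < l → Tendsto (fun α : ℝ => l ^ (1/α)) (nhds 1) (nhds l) := by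
        intro l hl
        have h1 : Tendsto (fun α : ℝ => Real.exp (Real.log l * (1/α))) (nhds 1) (nhds l) := by
          have := Real.continuous_exp.tendsto (Real.log l * 1)
          have h2 := this.comp ((tendsto_const_nhds (x := Real.log l)).mul hinv)
          simpa [Function.comp_def, Real.exp_log hl] using h2
        refine h1.congr fun α => ?_
        rw [← Real.rpow_def_of_pos hl]
      exact (((hl lk hk).sub (hl lj hj)).mono_left nhdsWithin_le_nhds)
    -- second factor
    have hY : Tendsto (fun α : ℝ =>
        -α / ((lj ^ ((1 - α)/α) - lk ^ ((1 - α)/α)) / ((1 - α)/α)))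
        (nhdsWithin 1 {(1:ℝ)}ᶜ) (nhds (-1 / (Real.log lj - Real.log lk))) := by
      have hnum : Tendsto (fun α : ℝ => -α) (nhdsWithin 1 {(1:ℝ)}ᶜ) (nhds (-1)) :=
        (continuous_neg.tendsto 1).mono_left nhdsWithin_le_nhds
      have hden := hslope.comp hbeta
      exact hnum.div (by simpa [Function.comp_def] using hden) hlogne
    have hT := hX.mul hY
    have hval : (lk - lj) * (-1 / (Real.log lj - Real.log lk))
        = (lk - lj) / (Real.log lk - Real.log lj) := by
      rw [show Real.log lj - Real.log lk = -(Real.log lk - Real.log lj) by ring,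
        div_neg, neg_div, neg_neg, mul_one_div]
    rw [hval] at hT
    refine hT.congr' ?_
    have hpos : ∀ᶠ α : ℝ in nhdsWithin 1 {(1:ℝ)}ᶜ, 0 < α :=
      eventually_nhdsWithin_of_eventually_nhds (eventually_gt_nhds one_pos)
    filter_upwards [hpos] with α hα0
    rw [div_div_eq_mul_div]
    rw [show -α * ((1 - α)/α) = α - 1 by field_simp; ring]
    ring
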